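/- Geometric decay of residuals under repeated 3/2-approximate routing: let R be an α-congestion-approximator for (B, C), let b_1 lie in the column space of B, and suppose flows f_1, …, f_T ∈ ℝ^E and demands b_2, …, b_{T+1} ∈ ℝ^V satisfy b_{i+1} = b_i − B f_i and ‖C⁻¹ f_i‖_∞ + 2α·‖R b_{i+1}‖_∞ ≤ (3/2)·opt(b_i) for each 1 ≤ i ≤ T. Then ‖R b_{i+1}‖_∞ ≤ (1/2)·‖R b_i‖_∞ for each i, and therefore ‖R b_{T+1}‖_∞ ≤ 2^{−T}·‖R b_1‖_∞. -/

import Mathlib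

open Matrix

/-- `linf x` is the maximum absolute entry of the vector `x`, i.e. `‖x‖_∞`. -/
noncomputable def linf {ι : Type*} [Fintype ι] (x : ι → ℝ) : ℝ := ⨆ i, |x i|

/-- `l1 x` is the sum of absolute entries of the vector `x`, i.e. `‖x‖₁`. -/
def l1 {ι : Type*} [Fintype ι] (x : ι → ℝ) : ℝ := ∑ i, |x i|

/-- `opt B c b` is the minimum congestion `‖C⁻¹ f‖_∞` over flows `f` with `B f = b`,
where `C` is the diagonal matrix of capacities `c`. -/
noncomputable def opt {V E : Type*} [Fintype V] [Fintype E]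
    (B : Matrix V E ℝ) (c : E → ℝ) (b : V → ℝ) : ℝ :=
  sInf {t : ℝ | ∃ f : E → ℝ, B.mulVec f = b ∧ t = linf fun e => f e / c e}

/-- `R` is an `α`-congestion-approximator for `(B, C)`:
`‖R b‖_∞ ≤ opt(b) ≤ α · ‖R b‖_∞` for every `b` in the column space of `B`. -/
def IsCongestionApprox {V E W : Type*} [Fintype V] [Fintype E] [Fintype W]
    (B : Matrix V E ℝ) (c : E → ℝ) (α : ℝ) (R : Matrix W V ℝ) : Prop :=
  ∀ b : V → ℝ, (∃ f : E → ℝ, B.mulVec f = b) →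
    linf (R.mulVec b) ≤ opt B c b ∧ opt B c b ≤ α * linf (R.mulVec b)

lemma linf_nonneg {ι : Type*} [Fintype ι] (x : ι → ℝ) : 0 ≤ linf x :=
  Real.iSup_nonneg fun i => abs_nonneg _

lemma le_linf {ι : Type*} [Fintype ι] (x : ι → ℝ) (i : ι) : |x i| ≤ linf x :=
  le_ciSup (Set.Finite.bddAbove (Set.finite_range fun j => |x j|)) i

lemma linf_add_le {ι : Type*} [Fintype ι] [Nonempty ι] (x y : ι → ℝ) :
    linf (x + y) ≤ linf x + linf y :=
  ciSup_le fun i => (abs_add_le _ _).trans (add_le_add (le_linf x i) (le_linf y i))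

lemma opt_le_linf_add_opt {V E : Type*} [Fintype V] [Fintype E] [Nonempty E]
    (B : Matrix V E ℝ) (c : E → ℝ) (b b' : V → ℝ) (f : E → ℝ)
    (hf : B.mulVec f = b - b') (h' : ∃ g, B.mulVec g = b') :
    opt B c b ≤ linf (fun e => f e / c e) + opt B c b' := by
  obtain ⟨g, hg⟩ := h'
  have hbdd : BddBelow {t : ℝ | ∃ h : E → ℝ, B.mulVec h = b ∧ t = linf fun e => h e / c e} := by
    refine ⟨0, ?_⟩
    rintro t ⟨h, _, rfl⟩
    exact linf_nonneg _
  rw [opt, ← sub_le_iff_le_add']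
  refine le_csInf ⟨linf fun e => g e / c e, g, hg, rfl⟩ ?_
  rintro s ⟨g', hg', rfl⟩
  rw [sub_le_iff_le_add']
  have hmem : linf (fun e => (f + g') e / c e) ∈
      {t : ℝ | ∃ h : E → ℝ, B.mulVec h = b ∧ t = linf fun e => h e / c e} :=
    ⟨f + g', by rw [Matrix.mulVec_add, hf, hg']; abel, rfl⟩
  refine (csInf_le hbdd hmem).trans ?_
  have heq : (fun e => (f + g') e / c e) =
      (fun e => f e / c e) + (fun e => g' e / c e) := funext fun e => add_div _ _ _
  rw [heq]
  exact linf_add_le _ _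

/-- Geometric decay of residuals under repeated `3/2`-approximate routing:
each step halves `‖R b_i‖_∞`, hence `‖R b_{T+1}‖_∞ ≤ 2^{−T} ‖R b_1‖_∞`. -/
theorem residual_geometric_decay {V E W : Type*} [Fintype V] [Fintype E] [Fintype W]
    [Nonempty V] [Nonempty E]
    (B : Matrix V E ℝ) (c : E → ℝ) (hc : ∀ e, 0 < c e)
    (α : ℝ) (hα : 1 ≤ α) (R : Matrix W V ℝ)
    (hR : IsCongestionApprox B c α R)
    (T : ℕ) (b : ℕ → V → ℝ) (f : ℕ → E → ℝ)
    (hb1 : ∃ g : E → ℝ, B.mulVec g = b 1)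
    (hrec : ∀ i, 1 ≤ i → i ≤ T → b (i + 1) = b i - B.mulVec (f i))
    (happrox : ∀ i, 1 ≤ i → i ≤ T →
      linf (fun e => f i e / c e) + 2 * α * linf (R.mulVec (b (i + 1))) ≤
        (3 / 2) * opt B c (b i)) :
    (∀ i, 1 ≤ i → i ≤ T →
        linf (R.mulVec (b (i + 1))) ≤ (1 / 2) * linf (R.mulVec (b i))) ∧
      linf (R.mulVec (b (T + 1))) ≤ (2 : ℝ) ^ (-(T : ℤ)) * linf (R.mulVec (b 1)) := by
  have hα0 : (0 : ℝ) < α := lt_of_lt_of_le one_pos hα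
  have hroute : ∀ i, 1 ≤ i → i ≤ T + 1 → ∃ g, B.mulVec g = b i := by
    intro i hi
    induction i, hi using Nat.le_induction with
    | base => intro _; exact hb1
    | succ n hn ih =>
      intro hn1
      obtain ⟨g, hg⟩ := ih (by omega)
      exact ⟨g - f n, by rw [Matrix.mulVec_sub, hg, hrec n hn (by omega)]⟩
  have hstep : ∀ i, 1 ≤ i → i ≤ T →
      linf (R.mulVec (b (i + 1))) ≤ (1 / 2) * linf (R.mulVec (b i)) := by
    intro i hi hiT
    have hri := hroute i hi (by omega)
    have hri1 := hroute (i + 1) (by omega) (by omega)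
    obtain ⟨h1, h2⟩ := hR (b i) hri
    obtain ⟨h3, h4⟩ := hR (b (i + 1)) hri1
    have hsub : opt B c (b i) ≤ linf (fun e => f i e / c e) + opt B c (b (i + 1)) :=
      opt_le_linf_add_opt B c (b i) (b (i + 1)) (f i)
        (by rw [hrec i hi hiT]; abel) hri1
    have ha := happrox i hi hiT
    have key : α * linf (R.mulVec (b (i + 1))) ≤
        α * ((1 / 2) * linf (R.mulVec (b i))) := by nlinarith
    exact (mul_le_mul_iff_right₀ hα0).mp key
  refine ⟨hstep, ?_⟩
  have hpow : ∀ n, n ≤ T →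
      linf (R.mulVec (b (n + 1))) ≤ (2 : ℝ) ^ (-(n : ℤ)) * linf (R.mulVec (b 1)) := by
    intro n
    induction n with
    | zero => intro _; simp
    | succ n ih =>
      intro h
      have h1 := hstep (n + 1) (by omega) h
      have h2 := ih (by omega)
      have h3 : linf (R.mulVec (b (n + 1 + 1))) ≤
          (1 / 2) * ((2 : ℝ) ^ (-(n : ℤ)) * linf (R.mulVec (b 1))) :=
        h1.trans (mul_le_mul_of_nonneg_left h2 (by norm_num))
      refine h3.trans (le_of_eq ?_)
      have : (-(((n : ℕ) + 1 : ℕ) : ℤ)) = -(n : ℤ) + (-1) := by push_cast; ring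
      rw [this, zpow_add₀ (two_ne_zero), _root_.zpow_neg_one]
      ring
  exact hpow T le_rfl
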